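/- Shingling is a biometric embedding of edit distance into set difference: for any shingle length c with 1 ≤ c ≤ n, the c-shingling map SH_c is a (t₁, t₂ = (2c−1)·t₁, m₁, m₂ = m₁ − ⌈n/c⌉·log₂(n−c+1))-biometric embedding of Edit_F(n) into SDif(F^c). Concretely: (i) for any strings w, w' of length n over F whose edit distance is at most t₁, |SH_c(w) Δ SH_c(w')| ≤ (2c−1)·t₁; (ii) for any distribution W on F^n with H∞(W) ≥ m₁, H∞(SH_c(W)) ≥ m₁ − ⌈n/c⌉·log₂(n−c+1); and the same holds for average min-entropy conditioned on any auxiliary random variable I. -/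

import Mathlib

open Finset

/-- A probability distribution on a finite type. -/
def IsDist {α : Type*} [Fintype α] (p : α → ℝ) : Prop :=
  (∀ a, 0 ≤ p a) ∧ ∑ a, p a = 1

/-- Min-entropy `H∞` of a distribution on a finite type. -/
noncomputable def minEntropy {α : Type*} [Fintype α] (p : α → ℝ) : ℝ :=
  - Real.logb 2 (⨆ a, p a)

/-- Average min-entropy `H̃∞(A | B)`. -/
noncomputable def avgMinEntropy {α β : Type*} [Fintype α] [Fintype β] (p : α × β → ℝ) : ℝ :=
  - Real.logb 2 (∑ b, ⨆ a, p (a, b))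

/-- A single edit step on strings (lists): insertion or deletion of one character. -/
def EditStep {F : Type} (u v : List F) : Prop :=
  (∃ (l : List F) (x : F) (r : List F), u = l ++ r ∧ v = l ++ x :: r) ∨
  (∃ (l : List F) (x : F) (r : List F), u = l ++ x :: r ∧ v = l ++ r)

/-- `EditLe t u v` means the edit distance (insertions and deletions) between `u` and `v`
is at most `t`. -/
def EditLe {F : Type} : ℕ → List F → List F → Prop
  | 0, u, v => u = v
  | t + 1, u, v => EditLe t u v ∨ ∃ z, EditStep u z ∧ EditLe t z v

/-- The `c`-shingle of the string `w` starting at position `j`. -/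
def shingleAt {F : Type} [Inhabited F] {n : ℕ} (w : Fin n → F) (c j : ℕ) : Fin c → F :=
  fun i => if h : j + i.1 < n then w ⟨j + i.1, h⟩ else default

/-- The `c`-shingling of a string `w` of length `n`: the set of all its `c`-shingles. -/
def shingling {F : Type} [Inhabited F] [DecidableEq F] {n : ℕ} (c : ℕ) (w : Fin n → F) :
    Finset (Fin c → F) :=
  (Finset.range (n - c + 1)).image fun j => shingleAt w c j

section Aux

set_option linter.unusedSectionVars false

variable {F : Type} [Inhabited F] [DecidableEq F]

/-- shingle of a list at position j -/
def shL (c : ℕ) (u : List F) (j : ℕ) : Fin c → F := fun i => u.getD (j + i.1) default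

/-- shingling of a list -/
def lsh (c : ℕ) (u : List F) : Finset (Fin c → F) :=
  if c ≤ u.length then (Finset.range (u.length - c + 1)).image (shL c u) else ∅

lemma shL_ins_left {c : ℕ} (l r : List F) (x : F) {j : ℕ} (hj : j + c ≤ l.length) :
    shL c (l ++ x :: r) j = shL c (l ++ r) j := by
  funext i
  have hi : j + i.1 < l.length := by omega
  show (l ++ x :: r).getD (j + i.1) default = (l ++ r).getD (j + i.1) default
  rw [List.getD_append _ _ _ _ hi, List.getD_append _ _ _ _ hi]

lemma shL_ins_right {c : ℕ} (l r : List F) (x : F) {j : ℕ} (hj : l.length ≤ j) :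
    shL c (l ++ x :: r) (j + 1) = shL c (l ++ r) j := by
  funext i
  have h1 : l.length ≤ j + 1 + i.1 := by omega
  have h2 : l.length ≤ j + i.1 := by omega
  show (l ++ x :: r).getD (j + 1 + i.1) default = (l ++ r).getD (j + i.1) default
  rw [List.getD_append_right _ _ _ _ h1, List.getD_append_right _ _ _ _ h2]
  have : j + 1 + i.1 - l.length = (j + i.1 - l.length) + 1 := by omega
  rw [this]
  rfl

lemma mem_lsh {c : ℕ} {u : List F} {s : Fin c → F} (hc : c ≤ u.length) {j : ℕ}
    (hj : j ≤ u.length - c) (hs : s = shL c u j) : s ∈ lsh c u := by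
  rw [lsh, if_pos hc]
  exact Finset.mem_image.2 ⟨j, Finset.mem_range.2 (by omega), hs.symm⟩

lemma step_ins_card {c : ℕ} (hc : 1 ≤ c) (l r : List F) (x : F) (hlen : c ≤ (l ++ r).length) :
    (symmDiff (lsh c (l ++ r)) (lsh c (l ++ x :: r))).card ≤ 2 * c - 1 := by
  set u := l ++ r with hu
  set v := l ++ x :: r with hv
  have hLv : v.length = u.length + 1 := by simp [hu, hv]; omega
  have hcv : c ≤ v.length := by omega
  have hsub1 : lsh c u \ lsh c v ⊆ (Finset.Ico (l.length + 1 - c) l.length).image (shL c u) := by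
    intro s hs
    obtain ⟨hs1, hs2⟩ := Finset.mem_sdiff.1 hs
    rw [lsh, if_pos hlen] at hs1
    obtain ⟨j, hj, rfl⟩ := Finset.mem_image.1 hs1
    rw [Finset.mem_range] at hj
    by_cases h1 : j + c ≤ l.length
    · exact absurd (mem_lsh hcv (by omega) (shL_ins_left l r x h1).symm) hs2
    by_cases h2 : l.length ≤ j
    · exact absurd (mem_lsh hcv (by omega) (shL_ins_right l r x h2).symm) hs2
    exact Finset.mem_image.2 ⟨j, Finset.mem_Ico.2 ⟨by omega, by omega⟩, rfl⟩
  have hsub2 : lsh c v \ lsh c u ⊆ (Finset.Icc (l.length + 1 - c) l.length).image (shL c v) := by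
    intro s hs
    obtain ⟨hs1, hs2⟩ := Finset.mem_sdiff.1 hs
    rw [lsh, if_pos hcv] at hs1
    obtain ⟨j, hj, rfl⟩ := Finset.mem_image.1 hs1
    rw [Finset.mem_range] at hj
    have hpl : l.length ≤ u.length := by simp [hu]
    by_cases h1 : j + c ≤ l.length
    · exact absurd (mem_lsh hlen (by omega) (shL_ins_left l r x h1)) hs2
    by_cases h2 : l.length + 1 ≤ j
    · have heq : shL c v j = shL c u (j - 1) := by
        have := shL_ins_right (c := c) l r x (j := j - 1) (by omega)
        rwa [Nat.sub_add_cancel (by omega)] at this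
      exact absurd (mem_lsh hlen (by omega) heq) hs2
    exact Finset.mem_image.2 ⟨j, Finset.mem_Icc.2 ⟨by omega, by omega⟩, rfl⟩
  have h1 := (Finset.card_le_card hsub1).trans (Finset.card_image_le.trans (le_of_eq (Nat.card_Ico _ _)))
  have h2 := (Finset.card_le_card hsub2).trans (Finset.card_image_le.trans (le_of_eq (Nat.card_Icc _ _)))
  calc (symmDiff (lsh c u) (lsh c v)).card
      ≤ (lsh c u \ lsh c v).card + (lsh c v \ lsh c u).card := by
        rw [symmDiff_def]; exact Finset.card_union_le _ _
    _ ≤ 2 * c - 1 := by omega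

lemma lsh_card_le {c : ℕ} (u : List F) : (lsh c u).card ≤ u.length - c + 1 := by
  rw [lsh]
  split
  · exact Finset.card_image_le.trans (le_of_eq (Finset.card_range _))
  · simp

lemma step_card {c : ℕ} (hc : 1 ≤ c) {u v : List F} (h : EditStep u v) :
    (symmDiff (lsh c u) (lsh c v)).card ≤ 2 * c - 1 := by
  have key : ∀ (l r : List F) (x : F),
      (symmDiff (lsh c (l ++ r)) (lsh c (l ++ x :: r))).card ≤ 2 * c - 1 := by
    intro l r x
    by_cases hlen : c ≤ (l ++ r).length
    · exact step_ins_card hc l r x hlen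
    · have h1 : lsh c (l ++ r) = ∅ := by rw [lsh, if_neg (by omega)]
      have h2 : (lsh c (l ++ x :: r)).card ≤ 1 := by
        refine (lsh_card_le _).trans ?_
        simp only [List.length_append, List.length_cons] at hlen ⊢
        omega
      rw [h1]
      calc (symmDiff (∅ : Finset (Fin c → F)) (lsh c (l ++ x :: r))).card
          = (lsh c (l ++ x :: r)).card := by rw [symmDiff_def]; simp
        _ ≤ 1 := h2
        _ ≤ 2 * c - 1 := by omega
  rcases h with ⟨l, x, r, rfl, rfl⟩ | ⟨l, x, r, rfl, rfl⟩
  · exact key l r x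
  · rw [symmDiff_comm]; exact key l r x

lemma editLe_card {c : ℕ} (hc : 1 ≤ c) : ∀ (t : ℕ) (u v : List F), EditLe t u v →
    (symmDiff (lsh c u) (lsh c v)).card ≤ (2 * c - 1) * t := by
  intro t
  induction t with
  | zero => intro u v h; rw [EditLe] at h; subst h; simp
  | succ t ih =>
    intro u v h
    rw [EditLe] at h
    rcases h with h | ⟨z, hz, hzv⟩
    · exact (ih u v h).trans (Nat.mul_le_mul_left _ (by omega))
    · calc (symmDiff (lsh c u) (lsh c v)).card
          ≤ (symmDiff (lsh c u) (lsh c z) ∪ symmDiff (lsh c z) (lsh c v)).card :=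
            Finset.card_le_card (symmDiff_triangle _ _ _)
        _ ≤ (symmDiff (lsh c u) (lsh c z)).card + (symmDiff (lsh c z) (lsh c v)).card :=
            Finset.card_union_le _ _
        _ ≤ (2 * c - 1) + (2 * c - 1) * t := Nat.add_le_add (step_card hc hz) (ih z v hzv)
        _ = (2 * c - 1) * (t + 1) := by ring

lemma lsh_ofFn {n c : ℕ} (hcn : c ≤ n) (w : Fin n → F) : lsh c (List.ofFn w) = shingling c w := by
  rw [lsh, if_pos (by simpa using hcn), shingling, List.length_ofFn]
  refine Finset.image_congr ?_
  intro j hj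
  rw [Finset.mem_coe, Finset.mem_range] at hj
  funext i
  have h : j + i.1 < n := by omega
  simp only [shL, shingleAt, dif_pos h]
  rw [List.getD_eq_getElem _ _ (by simpa using h), List.getElem_ofFn]

end Aux

section Entropy

variable {F : Type} [Fintype F] [Inhabited F] [DecidableEq F]

lemma nat_le_ceil_mul {n c : ℕ} (hc1 : 1 ≤ c) (hcn : c ≤ n) : n ≤ ((n + c - 1) / c) * c := by
  have hn : 1 ≤ n := le_trans hc1 hcn
  have e1 : (n + c - 1) / c = (n - 1) / c + 1 := by
    rw [show n + c - 1 = (n - 1) + c by omega, Nat.add_div_right _ (by omega)]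
  have e2 : (n - 1) / c * c + (n - 1) % c = n - 1 := Nat.div_add_mod' (n - 1) c
  have e3 : (n - 1) % c < c := Nat.mod_lt _ (by omega)
  rw [e1, add_mul, one_mul]
  omega

lemma ceil_mul_le {n c : ℕ} (hc1 : 1 ≤ c) (hcn : c ≤ n) : ((n + c - 1) / c) * c ≤ n + c - 1 :=
  Nat.div_mul_le_self _ _

lemma ceil_eq {n c : ℕ} (hc1 : 1 ≤ c) (hcn : c ≤ n) :
    (⌈(n : ℝ) / (c : ℝ)⌉ : ℝ) = (((n + c - 1) / c : ℕ) : ℝ) := by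
  have hn : 1 ≤ n := le_trans hc1 hcn
  have hcR : (0:ℝ) < (c:ℝ) := by exact_mod_cast hc1
  set m : ℕ := (n + c - 1) / c with hm
  have hm1 : 1 ≤ m := (Nat.one_le_div_iff (by omega)).2 (by omega)
  have h1 : (n:ℝ) ≤ (m:ℝ) * c := by exact_mod_cast nat_le_ceil_mul hc1 hcn
  have h2 : (m:ℝ) * c ≤ (n:ℝ) + c - 1 := by
    have := ceil_mul_le (n := n) (c := c) hc1 hcn
    have : ((m * c : ℕ) : ℝ) ≤ ((n + c - 1 : ℕ) : ℝ) := by exact_mod_cast this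
    push_cast at this
    rw [Nat.cast_sub (by omega)] at this <;> push_cast at this ⊢ <;> linarith [this]
  have : ⌈(n : ℝ) / (c : ℝ)⌉ = (m : ℤ) := by
    rw [Int.ceil_eq_iff]
    constructor
    · push_cast
      rw [lt_div_iff₀ hcR]
      nlinarith
    · push_cast
      rw [div_le_iff₀ hcR]
      exact h1
  rw [this]
  push_cast
  rfl

/-- Each fiber of the shingling map has size at most `(n-c+1)^⌈n/c⌉`. -/
lemma fiber_card {n c : ℕ} (hc1 : 1 ≤ c) (hcn : c ≤ n) (v : Finset (Fin c → F)) :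
    (Finset.univ.filter fun w : Fin n → F => shingling c w = v).card
      ≤ (n - c + 1) ^ ((n + c - 1) / c) := by
  set m := (n + c - 1) / c with hmdef
  rcases (Finset.univ.filter fun w : Fin n → F => shingling c w = v).eq_empty_or_nonempty with
    he | ⟨w₀, hw₀⟩
  · rw [he]; simp
  have hv : shingling c w₀ = v := (Finset.mem_filter.1 hw₀).2
  have hvcard : v.card ≤ n - c + 1 := by
    rw [← hv, shingling]
    exact Finset.card_image_le.trans (le_of_eq (Finset.card_range _))
  have hnm : n ≤ m * c := nat_le_ceil_mul hc1 hcn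
  set Φ : (Fin n → F) → (Fin m → (Fin c → F)) :=
    fun w k => shingleAt w c (min (k.1 * c) (n - c)) with hΦ
  have hmaps : ∀ w ∈ (Finset.univ.filter fun w : Fin n → F => shingling c w = v),
      Φ w ∈ Fintype.piFinset (fun _ : Fin m => v) := by
    intro w hw
    rw [Fintype.mem_piFinset]
    intro k
    rw [← (Finset.mem_filter.1 hw).2, shingling]
    exact Finset.mem_image.2 ⟨min (k.1 * c) (n - c), Finset.mem_range.2 (by omega), rfl⟩
  have hinj : Set.InjOn Φ ((Finset.univ.filter fun w : Fin n → F => shingling c w = v) : Set _) := by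
    intro w _ w' _ h
    funext t
    have hk : t.1 / c < m := (Nat.div_lt_iff_lt_mul (by omega)).2 (lt_of_lt_of_le t.2 hnm)
    have hkc : (t.1 / c) * c ≤ t.1 := Nat.div_mul_le_self _ _
    have ht : t.1 < (t.1 / c) * c + c := by
      have h1 := Nat.div_add_mod t.1 c
      have h2 : t.1 % c < c := Nat.mod_lt _ (by omega)
      rw [mul_comm] at h1
      omega
    set j := min ((t.1 / c) * c) (n - c) with hjdef
    have hj1 : j ≤ t.1 := by omega
    have hj2 : t.1 < j + c := by omega
    have hlt : j + (t.1 - j) < n := by omega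
    have hcomp := congrFun (congrFun h ⟨t.1 / c, hk⟩) ⟨t.1 - j, by omega⟩
    simp only [hΦ, shingleAt, dif_pos hlt] at hcomp
    have heq : (⟨j + (t.1 - j), hlt⟩ : Fin n) = t := by
      ext; simp; omega
    rw [← hjdef] at hcomp
    rw [dif_pos hlt, dif_pos hlt] at hcomp
    rwa [heq] at hcomp
  calc (Finset.univ.filter fun w : Fin n → F => shingling c w = v).card
      ≤ (Fintype.piFinset (fun _ : Fin m => v)).card := Finset.card_le_card_of_injOn Φ hmaps hinj
    _ = v.card ^ m := by rw [Fintype.card_piFinset]; simp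
    _ ≤ (n - c + 1) ^ m := Nat.pow_le_pow_left hvcard m

lemma le_fin_ciSup {α : Type*} [Fintype α] (f : α → ℝ) (a : α) : f a ≤ ⨆ a, f a :=
  le_ciSup (Set.Finite.bddAbove (Set.finite_range f)) a

lemma push_sup_le {n c : ℕ} (hc1 : 1 ≤ c) (hcn : c ≤ n) (W : (Fin n → F) → ℝ)
    (hW : ∀ w, 0 ≤ W w) :
    (⨆ v : Finset (Fin c → F), ∑ w ∈ Finset.univ.filter fun w => shingling c w = v, W w)
      ≤ (((n - c + 1) ^ ((n + c - 1) / c) : ℕ) : ℝ) * ⨆ w, W w := by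
  have hM0 : 0 ≤ ⨆ w, W w := le_trans (hW (Classical.arbitrary _)) (le_fin_ciSup W _)
  refine ciSup_le fun v => ?_
  calc ∑ w ∈ Finset.univ.filter fun w => shingling c w = v, W w
      ≤ (Finset.univ.filter fun w : Fin n → F => shingling c w = v).card • ⨆ w, W w :=
        Finset.sum_le_card_nsmul _ _ _ (fun w _ => le_fin_ciSup W w)
    _ = ((Finset.univ.filter fun w : Fin n → F => shingling c w = v).card : ℝ) * ⨆ w, W w := by
        rw [nsmul_eq_mul]
    _ ≤ (((n - c + 1) ^ ((n + c - 1) / c) : ℕ) : ℝ) * ⨆ w, W w := by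
        apply mul_le_mul_of_nonneg_right _ hM0
        exact_mod_cast fiber_card hc1 hcn v

lemma exists_pos {α : Type*} [Fintype α] {p : α → ℝ} (h : IsDist p) : ∃ a, 0 < p a := by
  by_contra h'
  push_neg at h'
  have : ∑ a, p a = 0 := Finset.sum_eq_zero fun a _ => le_antisymm (h' a) (h.1 a)
  rw [h.2] at this
  norm_num at this

lemma core_log (K : ℕ) (hK : 1 ≤ K) (m₁ : ℝ) {S T : ℝ} (hT : 0 < T) (hST : T ≤ (K : ℝ) * S)
    (hm : m₁ ≤ -Real.logb 2 S) : m₁ - Real.logb 2 (K : ℝ) ≤ -Real.logb 2 T := by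
  have hKpos : (0:ℝ) < (K:ℝ) := by exact_mod_cast hK
  have hS : 0 < S := by nlinarith
  have h1 : Real.logb 2 T ≤ Real.logb 2 ((K:ℝ) * S) :=
    (Real.logb_le_logb one_lt_two hT (by positivity)).2 hST
  rw [Real.logb_mul (ne_of_gt hKpos) (ne_of_gt hS)] at h1
  linarith

end Entropy

lemma coeff_eq_log {n c : ℕ} (hc1 : 1 ≤ c) (hcn : c ≤ n) :
    (⌈(n : ℝ) / (c : ℝ)⌉ : ℝ) * Real.logb 2 ((n : ℝ) - (c : ℝ) + 1)
      = Real.logb 2 ((((n - c + 1) ^ ((n + c - 1) / c) : ℕ)) : ℝ) := by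
  rw [ceil_eq hc1 hcn]
  have hcast : ((((n - c + 1) ^ ((n + c - 1) / c) : ℕ)) : ℝ)
      = ((n : ℝ) - (c : ℝ) + 1) ^ ((n + c - 1) / c) := by
    push_cast [hcn]
    ring
  rw [hcast, Real.logb_pow]

theorem shingling_biometric_embedding {F : Type} [Fintype F] [Inhabited F] [DecidableEq F]
    (n c : ℕ) (hc1 : 1 ≤ c) (hcn : c ≤ n) (t₁ : ℕ) (m₁ : ℝ) :
    -- (i) distances are preserved up to (2c−1)·t₁
    (∀ w w' : Fin n → F, EditLe t₁ (List.ofFn w) (List.ofFn w') →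
      (symmDiff (shingling c w) (shingling c w')).card ≤ (2 * c - 1) * t₁) ∧
    -- (ii) min-entropy decreases by at most ⌈n/c⌉·log₂(n−c+1)
    (∀ W : (Fin n → F) → ℝ, IsDist W → m₁ ≤ minEntropy W →
      m₁ - (⌈(n : ℝ) / (c : ℝ)⌉ : ℝ) * Real.logb 2 ((n : ℝ) - (c : ℝ) + 1)
        ≤ minEntropy (fun v : Finset (Fin c → F) =>
            ∑ w ∈ Finset.univ.filter fun w => shingling c w = v, W w)) ∧
    -- and the same for average min-entropy given any auxiliary random variable I
    (∀ (ι : Type) [Fintype ι] (p : (Fin n → F) × ι → ℝ),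
      IsDist p → m₁ ≤ avgMinEntropy p →
      m₁ - (⌈(n : ℝ) / (c : ℝ)⌉ : ℝ) * Real.logb 2 ((n : ℝ) - (c : ℝ) + 1)
        ≤ avgMinEntropy (fun x : Finset (Fin c → F) × ι =>
            ∑ w ∈ Finset.univ.filter fun w => shingling c w = x.1, p (w, x.2))) := by
  have hK1 : 1 ≤ (n - c + 1) ^ ((n + c - 1) / c) := Nat.one_le_pow _ _ (by omega)
  refine ⟨?_, ?_, ?_⟩
  · intro w w' h
    rw [← lsh_ofFn hcn w, ← lsh_ofFn hcn w']
    exact editLe_card hc1 t₁ _ _ h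
  · intro W hW hm
    rw [coeff_eq_log hc1 hcn, minEntropy]
    obtain ⟨w₁, hw₁⟩ := exists_pos hW
    have hT : 0 < ⨆ v : Finset (Fin c → F),
        ∑ w ∈ Finset.univ.filter fun w => shingling c w = v, W w := by
      have h1 : W w₁ ≤ ∑ w ∈ Finset.univ.filter
          fun w => shingling c w = shingling c w₁, W w :=
        Finset.single_le_sum (fun w _ => hW.1 w)
          (Finset.mem_filter.2 ⟨Finset.mem_univ _, rfl⟩)
      exact lt_of_lt_of_le (lt_of_lt_of_le hw₁ h1)
        (le_fin_ciSup (fun v : Finset (Fin c → F) =>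
          ∑ w ∈ Finset.univ.filter fun w => shingling c w = v, W w) _)
    exact core_log _ hK1 m₁ hT (push_sup_le hc1 hcn W hW.1) hm
  · intro ι _ p hp hm
    rw [coeff_eq_log hc1 hcn, avgMinEntropy]
    rw [avgMinEntropy] at hm
    obtain ⟨⟨w₁, b₁⟩, hw₁⟩ := exists_pos hp
    have hT : 0 < ∑ b, ⨆ v : Finset (Fin c → F),
        ∑ w ∈ Finset.univ.filter fun w => shingling c w = v, p (w, b) := by
      refine Finset.sum_pos' (fun b _ => ?_) ⟨b₁, Finset.mem_univ _, ?_⟩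
      · refine le_trans (Finset.sum_nonneg fun w _ => hp.1 _)
          (le_fin_ciSup (fun v : Finset (Fin c → F) =>
            ∑ w ∈ Finset.univ.filter fun w => shingling c w = v, p (w, b)) ∅)
      · have h1 : p (w₁, b₁) ≤ ∑ w ∈ Finset.univ.filter
            fun w => shingling c w = shingling c w₁, p (w, b₁) :=
          Finset.single_le_sum (f := fun w => p (w, b₁)) (fun w _ => hp.1 _)
            (Finset.mem_filter.2 ⟨Finset.mem_univ w₁, rfl⟩)
        exact lt_of_lt_of_le (lt_of_lt_of_le hw₁ h1)
          (le_fin_ciSup (fun v : Finset (Fin c → F) =>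
            ∑ w ∈ Finset.univ.filter fun w => shingling c w = v, p (w, b₁)) _)
    have hST : (∑ b, ⨆ v : Finset (Fin c → F),
          ∑ w ∈ Finset.univ.filter fun w => shingling c w = v, p (w, b))
        ≤ (((n - c + 1) ^ ((n + c - 1) / c) : ℕ) : ℝ) * ∑ b, ⨆ w, p (w, b) := by
      rw [Finset.mul_sum]
      exact Finset.sum_le_sum fun b _ => push_sup_le hc1 hcn (fun w => p (w, b)) (fun w => hp.1 _)
    exact core_log _ hK1 m₁ hT hST hm
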